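/- Let G be a cactus and let P and Q be two isometric paths of G with a common endpoint c (a center of G with rad(G) = r) satisfying V(P) ∩ V(Q) = {c}, length(P) = r and r−1 ≤ length(Q) ≤ r. Then there is at most one path P₁ in G that avoids c, joins a vertex v of P∖{c} with a vertex w of Q∖{c}, and intersects P only at v and Q only at w. -/

import Mathlib

open SimpleGraph

variable {V : Type*}

/-- `p` restricted to `{0,…,k}` is an isometric path of length `k` in `G`. -/
def IsIsomPath (G : SimpleGraph V) (p : ℕ → V) (k : ℕ) : Prop :=
  ∀ i j, i ≤ k → j ≤ k → G.dist (p i) (p j) = max i j - min i j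

def pathVerts (p : ℕ → V) (k : ℕ) : Set V := {x | ∃ i, i ≤ k ∧ p i = x}

noncomputable def ecc (G : SimpleGraph V) [Fintype V] (v : V) : ℕ :=
  Finset.univ.sup (fun u => G.dist v u)

noncomputable def grad (G : SimpleGraph V) [Fintype V] : ℕ :=
  sInf (Set.range (ecc G))

noncomputable def gdiam (G : SimpleGraph V) [Fintype V] : ℕ :=
  Finset.univ.sup (fun v => ecc G v)

def IsMultipacking (G : SimpleGraph V) [Fintype V] (M : Set V) : Prop :=
  ∀ v : V, ∀ r : ℕ, 1 ≤ r → r ≤ gdiam G →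
    (M ∩ {u | G.dist v u ≤ r}).ncard ≤ r

noncomputable def mp (G : SimpleGraph V) [Fintype V] : ℕ :=
  sSup {n | ∃ M : Set V, IsMultipacking G M ∧ M.ncard = n}

def IsDomBroadcast (G : SimpleGraph V) [Fintype V] (f : V → ℕ) : Prop :=
  (∀ v, f v ≤ gdiam G) ∧ ∀ u : V, ∃ v : V, 1 ≤ f v ∧ G.dist u v ≤ f v

noncomputable def gammaB (G : SimpleGraph V) [Fintype V] : ℕ :=
  sInf {n | ∃ f : V → ℕ, IsDomBroadcast G f ∧ ∑ v, f v = n}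

noncomputable def gammaDom (G : SimpleGraph V) [Fintype V] : ℕ :=
  sInf {n | ∃ D : Finset V, (∀ u : V, ∃ v ∈ D, u = v ∨ G.Adj u v) ∧ D.card = n}

def IsFracMP (G : SimpleGraph V) [Fintype V] (w : V → ℝ) : Prop :=
  (∀ v, 0 ≤ w v) ∧ ∀ v : V, ∀ r : ℕ, 1 ≤ r →
    (∑ u ∈ Finset.univ.filter (fun u => G.dist v u ≤ r), w u) ≤ r

noncomputable def mpf (G : SimpleGraph V) [Fintype V] : ℝ :=
  sSup {s | ∃ w : V → ℝ, IsFracMP G w ∧ ∑ v, w v = s}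

/-- A cactus: connected and every edge lies on at most one cycle. -/
def IsCactus (G : SimpleGraph V) : Prop :=
  G.Connected ∧ ∀ (u v : V) (c₁ : G.Walk u u) (c₂ : G.Walk v v),
    c₁.IsCycle → c₂.IsCycle → ∀ e, e ∈ c₁.edges → e ∈ c₂.edges →
      (∀ e', e' ∈ c₁.edges ↔ e' ∈ c₂.edges)

def pentRel (k : ℕ) (x y : Fin (3*k) × Fin 5) : Prop :=
  (x.1 = y.1 ∧ (x.2.val + 1) % 5 = y.2.val) ∨
  (x.1.val + 1 = y.1.val ∧ x.2.val = 1 ∧ y.2.val = 4)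

def Gk (k : ℕ) : SimpleGraph (Fin (3*k) × Fin 5) := SimpleGraph.fromRel (pentRel k)


/-- `W` is a path joining a non-center vertex of `p` with a non-center vertex of `q`,
avoiding `c`, and meeting `p` only at its first endpoint and `q` only at its last. -/
def ConnPath (G : SimpleGraph V) (p q : ℕ → V) (r r' : ℕ) (c : V)
    (x y : V) (W : G.Walk x y) : Prop :=
  W.IsPath ∧ (∃ i, 1 ≤ i ∧ i ≤ r ∧ p i = x) ∧ (∃ j, 1 ≤ j ∧ j ≤ r' ∧ q j = y) ∧
  c ∉ W.support ∧
  {z | z ∈ W.support} ∩ pathVerts p r = {x} ∧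
  {z | z ∈ W.support} ∩ pathVerts q r' = {y}

section CactusAux

variable {G : SimpleGraph V}

/-- The walk along `p 0, p 1, …, p i`. -/
def chainWalk (G : SimpleGraph V) (p : ℕ → V) :
    ∀ i, (∀ k, k < i → G.Adj (p k) (p (k+1))) → G.Walk (p 0) (p i)
  | 0, _ => Walk.nil
  | (i+1), h => (chainWalk G p i (fun k hk => h k (Nat.lt_succ_of_lt hk))).concat
      (h i (Nat.lt_succ_self i))

lemma chainWalk_support (p : ℕ → V) (i) (h) :
    (chainWalk G p i h).support = (List.range (i+1)).map p := by
  induction i with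
  | zero => simp [chainWalk, List.range_succ]
  | succ n ih => rw [chainWalk, Walk.support_concat, ih]; simp [List.range_succ]

lemma chainWalk_edges (p : ℕ → V) (i) (h) :
    (chainWalk G p i h).edges = (List.range i).map (fun k => s(p k, p (k+1))) := by
  induction i with
  | zero => simp [chainWalk]
  | succ n ih => rw [chainWalk, Walk.edges_concat, ih]; simp [List.range_succ]

lemma chainWalk_length (p : ℕ → V) (i) (h) :
    (chainWalk G p i h).length = i := by
  have := congrArg List.length (chainWalk_edges (G := G) p i h)
  simpa [Walk.length_edges] using this

/-- Two paths between the same endpoints with the same edge sets have the same support. -/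
lemma path_support_eq {x y : V} (w₁ : G.Walk x y) :
    w₁.IsPath → ∀ (w₂ : G.Walk x y), w₂.IsPath →
    (∀ e, e ∈ w₁.edges ↔ e ∈ w₂.edges) → w₁.support = w₂.support := by
  induction w₁ with
  | nil =>
    intro _ w₂ h₂ he
    have hnil : w₂ = Walk.nil := by
      rw [← Walk.nil_iff_eq_nil, ← Walk.length_eq_zero_iff, ← Walk.length_edges, List.length_eq_zero_iff]
      refine List.eq_nil_iff_forall_not_mem.mpr (fun e hme => ?_)
      simpa using (he e).mpr hme
    rw [hnil]
  | @cons x b y h w ih =>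
    intro h₁ w₂ h₂ he
    cases w₂ with
    | nil =>
      exfalso
      have := (he s(x, b)).mp (by simp)
      simp at this
    | @cons _ b' _ h' w' =>
      have hb : b' = b := by
        have hm : s(x, b) ∈ (Walk.cons h' w').edges := (he _).mp (by simp)
        rw [Walk.edges_cons, List.mem_cons] at hm
        rcases hm with hm | hm
        · rw [Sym2.eq_iff] at hm
          rcases hm with ⟨_, rfl⟩ | ⟨hm1, hm2⟩
          · rfl
          · exact absurd hm2.symm h.ne
        · exact absurd (Walk.fst_mem_support_of_mem_edges w' hm)
            ((Walk.cons_isPath_iff h' w').mp h₂).2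
      subst hb
      have hkey : ∀ e, e ∈ w.edges ↔ e ∈ w'.edges := by
        intro e
        constructor
        · intro hw
          have := (he e).mp (by simp [hw])
          rw [Walk.edges_cons, List.mem_cons] at this
          rcases this with rfl | h'' 
          · exact absurd (Walk.fst_mem_support_of_mem_edges w hw)
              ((Walk.cons_isPath_iff h w).mp h₁).2
          · exact h''
        · intro hw
          have := (he e).mpr (by simp [hw])
          rw [Walk.edges_cons, List.mem_cons] at this
          rcases this with rfl | h''
          · exact absurd (Walk.fst_mem_support_of_mem_edges w' hw)
              ((Walk.cons_isPath_iff h' w').mp h₂).2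
          · exact h''
      have := ih ((Walk.cons_isPath_iff h w).mp h₁).1 w'
        ((Walk.cons_isPath_iff h' w').mp h₂).1 hkey
      simp [Walk.support_cons, this]

def bigCycle (G : SimpleGraph V) (p q : ℕ → V) {c x y : V} (i j : ℕ)
    (hap : ∀ k, k < i → G.Adj (p k) (p (k+1))) (haq : ∀ k, k < j → G.Adj (q k) (q (k+1)))
    (hp0 : p 0 = c) (hq0 : q 0 = c) (hx : p i = x) (hy : q j = y)
    (W : G.Walk x y) : G.Walk c c :=
  ((chainWalk G p i hap).copy hp0 hx).append
    (W.append ((chainWalk G q j haq).copy hq0 hy).reverse)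

variable {p q : ℕ → V} {c x y : V} {i j : ℕ}
  {hap : ∀ k, k < i → G.Adj (p k) (p (k+1))} {haq : ∀ k, k < j → G.Adj (q k) (q (k+1))}
  {hp0 : p 0 = c} {hq0 : q 0 = c} {hx : p i = x} {hy : q j = y} {W : G.Walk x y}

lemma bigCycle_edges_mem (e : Sym2 V) :
    e ∈ (bigCycle G p q i j hap haq hp0 hq0 hx hy W).edges ↔
      (∃ k, k < i ∧ e = s(p k, p (k+1))) ∨ e ∈ W.edges ∨
      (∃ l, l < j ∧ e = s(q l, q (l+1))) := by
  simp only [bigCycle, Walk.edges_append, Walk.edges_copy, Walk.edges_reverse,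
    chainWalk_edges, List.mem_append, List.mem_reverse, List.mem_map, List.mem_range]
  constructor
  · rintro (⟨k, hk, rfl⟩ | h | ⟨l, hl, rfl⟩)
    · exact Or.inl ⟨k, hk, rfl⟩
    · exact Or.inr (Or.inl h)
    · exact Or.inr (Or.inr ⟨l, hl, rfl⟩)
  · rintro (⟨k, hk, rfl⟩ | h | ⟨l, hl, rfl⟩)
    · exact Or.inl ⟨k, hk, rfl⟩
    · exact Or.inr (Or.inl h)
    · exact Or.inr (Or.inr ⟨l, hl, rfl⟩)

lemma bigCycle_support_tail :
    (bigCycle G p q i j hap haq hp0 hq0 hx hy W).support.tail =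
      ((List.range i).map (fun k => p (k+1))) ++
      (W.support.tail ++ ((List.range j).map q).reverse) := by
  rw [bigCycle, Walk.tail_support_append, Walk.tail_support_append]
  congr 1
  · rw [Walk.support_copy, chainWalk_support, List.range_succ_eq_map]
    simp [List.map_map, Function.comp]
  · congr 1
    rw [Walk.support_reverse, Walk.support_copy, chainWalk_support, List.range_succ]
    simp

lemma bigCycle_length :
    (bigCycle G p q i j hap haq hp0 hq0 hx hy W).length = i + (W.length + j) := by
  simp [bigCycle, Walk.length_append, Walk.length_copy, Walk.length_reverse, chainWalk_length]

lemma mem_pathVertsAux {p : ℕ → V} {r k : ℕ} (hk : k ≤ r) : p k ∈ pathVerts p r := ⟨k, hk, rfl⟩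

lemma bigCycle_isCycle {r r' : ℕ}
    (hir : i ≤ r) (hjr : j ≤ r') (hi1 : 1 ≤ i) (hj1 : 1 ≤ j)
    (injp : ∀ a b, a ≤ r → b ≤ r → p a = p b → a = b)
    (injq : ∀ a b, a ≤ r' → b ≤ r' → q a = q b → a = b)
    (hmeet : pathVerts p r ∩ pathVerts q r' = {c})
    (hW : W.IsPath)
    (hWp : {z | z ∈ W.support} ∩ pathVerts p r = {x})
    (hWq : {z | z ∈ W.support} ∩ pathVerts q r' = {y}) :
    (bigCycle G p q i j hap haq hp0 hq0 hx hy W).IsCycle := by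
  have hpc : ∀ {k m : ℕ}, k ≤ r → m ≤ r' → p k = q m → k = 0 := by
    intro k m hk hm hkm
    have hmem : p k ∈ ({c} : Set V) := by
      rw [← hmeet]; exact ⟨mem_pathVertsAux hk, hkm ▸ mem_pathVertsAux hm⟩
    exact injp k 0 hk (Nat.zero_le _) (by rwa [hp0, ← Set.mem_singleton_iff])
  have hxW : ∀ {z : V}, z ∈ W.support → z ∈ pathVerts p r → z = x := by
    intro z h1 h2
    have : z ∈ ({x} : Set V) := by rw [← hWp]; exact ⟨h1, h2⟩
    exact this
  have hyW : ∀ {z : V}, z ∈ W.support → z ∈ pathVerts q r' → z = y := by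
    intro z h1 h2
    have : z ∈ ({y} : Set V) := by rw [← hWq]; exact ⟨h1, h2⟩
    exact this
  refine ⟨⟨⟨?_⟩, ?_⟩, ?_⟩
  · -- edges nodup
    have hE : (bigCycle G p q i j hap haq hp0 hq0 hx hy W).edges =
        ((List.range i).map (fun k => s(p k, p (k+1)))) ++
        (W.edges ++ ((List.range j).map (fun l => s(q l, q (l+1)))).reverse) := by
      simp only [bigCycle, Walk.edges_append, Walk.edges_copy, Walk.edges_reverse,
        chainWalk_edges]
    rw [hE, List.nodup_append, List.nodup_append]
    refine ⟨?_, ⟨hW.edges_nodup, ?_, ?_⟩, ?_⟩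
    · refine List.Nodup.map_on ?_ List.nodup_range
      intro a ha b hb hab
      simp only [List.mem_range] at ha hb
      rw [Sym2.eq_iff] at hab
      rcases hab with ⟨h1, _⟩ | ⟨h1, h2⟩
      · exact injp a b (by omega) (by omega) h1
      · have e1 := injp a (b+1) (by omega) (by omega) h1
        have e2 := injp (a+1) b (by omega) (by omega) h2
        omega
    · rw [List.nodup_reverse]
      refine List.Nodup.map_on ?_ List.nodup_range
      intro a ha b hb hab
      simp only [List.mem_range] at ha hb
      rw [Sym2.eq_iff] at hab
      rcases hab with ⟨h1, _⟩ | ⟨h1, h2⟩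
      · exact injq a b (by omega) (by omega) h1
      · have e1 := injq a (b+1) (by omega) (by omega) h1
        have e2 := injq (a+1) b (by omega) (by omega) h2
        omega
    · -- W.edges disjoint from q-edges
      intro e he e' hqe (hee : e = e'); rw [← hee] at hqe
      rw [List.mem_reverse, List.mem_map] at hqe
      obtain ⟨l, hl, rfl⟩ := hqe
      rw [List.mem_range] at hl
      have h1 : q l ∈ W.support := W.fst_mem_support_of_mem_edges he
      have h2 : q l = y := hyW h1 (mem_pathVertsAux (by omega))
      have := injq l j (by omega) hjr (by rw [h2, hy])
      omega
    · -- p-edges disjoint from the rest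
      intro e he e' hrest (hee : e = e'); rw [← hee] at hrest
      rw [List.mem_map] at he
      obtain ⟨k, hk, rfl⟩ := he
      rw [List.mem_range] at hk
      rcases List.mem_append.mp hrest with hWe | hqe
      · have h1 : p k ∈ W.support := W.fst_mem_support_of_mem_edges hWe
        have h2 : p k = x := hxW h1 (mem_pathVertsAux (by omega))
        have := injp k i (by omega) hir (by rw [h2, hx])
        omega
      · rw [List.mem_reverse, List.mem_map] at hqe
        obtain ⟨l, hl, heq⟩ := hqe
        rw [List.mem_range] at hl
        rw [Sym2.eq_iff] at heq
        rcases heq with ⟨_, h2⟩ | ⟨h1, _⟩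
        · have := hpc (k := k+1) (m := l+1) (by omega) (by omega) h2.symm
          omega
        · have := hpc (k := k+1) (m := l) (by omega) (by omega) h1.symm
          omega
  · -- ne nil
    intro hnil
    have := congrArg Walk.length hnil
    rw [bigCycle_length] at this
    simp only [Walk.length_nil] at this
    omega
  · -- support tail nodup
    rw [bigCycle_support_tail, List.nodup_append, List.nodup_append]
    have hxnotail : x ∉ W.support.tail := by
      have hnd := hW.support_nodup
      rw [W.support_eq_cons] at hnd
      exact (List.nodup_cons.mp hnd).1
    refine ⟨?_, ⟨?_, ?_, ?_⟩, ?_⟩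
    · refine List.Nodup.map_on ?_ List.nodup_range
      intro a ha b hb hab
      simp only [List.mem_range] at ha hb
      have := injp (a+1) (b+1) (by omega) (by omega) hab
      omega
    · exact (List.tail_sublist _).nodup hW.support_nodup
    · rw [List.nodup_reverse]
      refine List.Nodup.map_on ?_ List.nodup_range
      intro a ha b hb hab
      simp only [List.mem_range] at ha hb
      exact injq a b (by omega) (by omega) hab
    · -- W.support.tail disjoint from q-vertices
      intro z hz z' hqz (hzz : z = z'); rw [← hzz] at hqz
      rw [List.mem_reverse, List.mem_map] at hqz
      obtain ⟨l, hl, rfl⟩ := hqz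
      rw [List.mem_range] at hl
      have h2 : q l = y := hyW (List.mem_of_mem_tail hz) (mem_pathVertsAux (by omega))
      have := injq l j (by omega) hjr (by rw [h2, hy])
      omega
    · -- p-vertices disjoint from the rest
      intro z hz z' hrest (hzz : z = z'); rw [← hzz] at hrest
      rw [List.mem_map] at hz
      obtain ⟨k, hk, rfl⟩ := hz
      rw [List.mem_range] at hk
      rcases List.mem_append.mp hrest with hWz | hqz
      · have h2 : p (k+1) = x := hxW (List.mem_of_mem_tail hWz) (mem_pathVertsAux (by omega))
        exact hxnotail (h2 ▸ hWz)
      · rw [List.mem_reverse, List.mem_map] at hqz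
        obtain ⟨l, hl, heq⟩ := hqz
        rw [List.mem_range] at hl
        have := hpc (k := k+1) (m := l) (by omega) (by omega) heq.symm
        omega

lemma pIndex_le {p q : ℕ → V} {r r' : ℕ} {c x y : V} {W : G.Walk x y}
    (injp : ∀ a b, a ≤ r → b ≤ r → p a = p b → a = b)
    (hp0 : p 0 = c)
    (hmeet : pathVerts p r ∩ pathVerts q r' = {c})
    (hWp : {z | z ∈ W.support} ∩ pathVerts p r = {x})
    {i i' j' : ℕ} (hi1 : 1 ≤ i) (hir : i ≤ r) (hi'r : i' ≤ r) (hj'r : j' ≤ r')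
    (hcase : (∃ k, k < i' ∧ s(p (i-1), p i) = s(p k, p (k+1))) ∨
             s(p (i-1), p i) ∈ W.edges ∨
             (∃ l, l < j' ∧ s(p (i-1), p i) = s(q l, q (l+1)))) :
    i ≤ i' := by
  rcases hcase with ⟨k, hk, heq⟩ | hWe | ⟨l, hl, heq⟩
  · rw [Sym2.eq_iff] at heq
    rcases heq with ⟨h1, h2⟩ | ⟨h1, h2⟩
    · have := injp i (k+1) hir (by omega) h2
      omega
    · have e1 := injp (i-1) (k+1) (by omega) (by omega) h1
      have e2 := injp i k hir (by omega) h2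
      omega
  · have ha : p i ∈ W.support := W.snd_mem_support_of_mem_edges hWe
    have hb : p (i-1) ∈ W.support := W.fst_mem_support_of_mem_edges hWe
    have hax : p i = x := by
      have : p i ∈ ({x} : Set V) := by rw [← hWp]; exact ⟨ha, mem_pathVertsAux hir⟩
      exact this
    have hbx : p (i-1) = x := by
      have : p (i-1) ∈ ({x} : Set V) := by
        rw [← hWp]; exact ⟨hb, mem_pathVertsAux (by omega)⟩
      exact this
    have := injp i (i-1) hir (by omega) (by rw [hax, hbx])
    omega
  · exfalso
    rw [Sym2.eq_iff] at heq
    have hqm : ∃ m, m ≤ r' ∧ p i = q m := by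
      rcases heq with ⟨_, h2⟩ | ⟨_, h2⟩
      · exact ⟨l+1, by omega, h2⟩
      · exact ⟨l, by omega, h2⟩
    obtain ⟨m, hm, hpm⟩ := hqm
    have hmem : p i ∈ ({c} : Set V) := by
      rw [← hmeet]; exact ⟨mem_pathVertsAux hir, hpm ▸ mem_pathVertsAux hm⟩
    have : p i = c := hmem
    have := injp i 0 hir (by omega) (by rw [this, hp0])
    omega

lemma qIndex_le {p q : ℕ → V} {r r' : ℕ} {c x y : V} {W : G.Walk x y}
    (injq : ∀ a b, a ≤ r' → b ≤ r' → q a = q b → a = b)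
    (hq0 : q 0 = c)
    (hmeet : pathVerts p r ∩ pathVerts q r' = {c})
    (hWq : {z | z ∈ W.support} ∩ pathVerts q r' = {y})
    {j i' j' : ℕ} (hj1 : 1 ≤ j) (hjr : j ≤ r') (hi'r : i' ≤ r) (hj'r : j' ≤ r')
    (hcase : (∃ k, k < i' ∧ s(q (j-1), q j) = s(p k, p (k+1))) ∨
             s(q (j-1), q j) ∈ W.edges ∨
             (∃ l, l < j' ∧ s(q (j-1), q j) = s(q l, q (l+1)))) :
    j ≤ j' := by
  rcases hcase with ⟨k, hk, heq⟩ | hWe | ⟨l, hl, heq⟩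
  · exfalso
    rw [Sym2.eq_iff] at heq
    have hqm : ∃ m, m ≤ r ∧ q j = p m := by
      rcases heq with ⟨_, h2⟩ | ⟨_, h2⟩
      · exact ⟨k+1, by omega, h2⟩
      · exact ⟨k, by omega, h2⟩
    obtain ⟨m, hm, hpm⟩ := hqm
    have hmem : q j ∈ ({c} : Set V) := by
      rw [← hmeet]; exact ⟨hpm ▸ mem_pathVertsAux hm, mem_pathVertsAux hjr⟩
    have : q j = c := hmem
    have := injq j 0 hjr (by omega) (by rw [this, hq0])
    omega
  · have ha : q j ∈ W.support := W.snd_mem_support_of_mem_edges hWe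
    have hb : q (j-1) ∈ W.support := W.fst_mem_support_of_mem_edges hWe
    have hay : q j = y := by
      have : q j ∈ ({y} : Set V) := by rw [← hWq]; exact ⟨ha, mem_pathVertsAux hjr⟩
      exact this
    have hby : q (j-1) = y := by
      have : q (j-1) ∈ ({y} : Set V) := by
        rw [← hWq]; exact ⟨hb, mem_pathVertsAux (by omega)⟩
      exact this
    have := injq j (j-1) hjr (by omega) (by rw [hay, hby])
    omega
  · rw [Sym2.eq_iff] at heq
    rcases heq with ⟨h1, h2⟩ | ⟨h1, h2⟩
    · have := injq j (l+1) hjr (by omega) h2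
      omega
    · have e1 := injq (j-1) (l+1) (by omega) (by omega) h1
      have e2 := injq j l hjr (by omega) h2
      omega

lemma wEdge_transfer {p q : ℕ → V} {r r' : ℕ} {x y x' y' : V}
    {W : G.Walk x y} {W' : G.Walk x' y'}
    (injp : ∀ a b, a ≤ r → b ≤ r → p a = p b → a = b)
    (injq : ∀ a b, a ≤ r' → b ≤ r' → q a = q b → a = b)
    (hWp : {z | z ∈ W.support} ∩ pathVerts p r = {x})
    (hWq : {z | z ∈ W.support} ∩ pathVerts q r' = {y})
    {i' j' : ℕ} (hi'r : i' ≤ r) (hj'r : j' ≤ r') {e : Sym2 V}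
    (heW : e ∈ W.edges)
    (hcase : (∃ k, k < i' ∧ e = s(p k, p (k+1))) ∨ e ∈ W'.edges ∨
             (∃ l, l < j' ∧ e = s(q l, q (l+1)))) :
    e ∈ W'.edges := by
  rcases hcase with ⟨k, hk, rfl⟩ | h | ⟨l, hl, rfl⟩
  · exfalso
    have ha : p k ∈ W.support := W.fst_mem_support_of_mem_edges heW
    have hb : p (k+1) ∈ W.support := W.snd_mem_support_of_mem_edges heW
    have hax : p k = x := by
      have : p k ∈ ({x} : Set V) := by rw [← hWp]; exact ⟨ha, mem_pathVertsAux (by omega)⟩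
      exact this
    have hbx : p (k+1) = x := by
      have : p (k+1) ∈ ({x} : Set V) := by
        rw [← hWp]; exact ⟨hb, mem_pathVertsAux (by omega)⟩
      exact this
    have := injp k (k+1) (by omega) (by omega) (by rw [hax, hbx])
    omega
  · exact h
  · exfalso
    have ha : q l ∈ W.support := W.fst_mem_support_of_mem_edges heW
    have hb : q (l+1) ∈ W.support := W.snd_mem_support_of_mem_edges heW
    have hay : q l = y := by
      have : q l ∈ ({y} : Set V) := by rw [← hWq]; exact ⟨ha, mem_pathVertsAux (by omega)⟩
      exact this
    have hby : q (l+1) = y := by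
      have : q (l+1) ∈ ({y} : Set V) := by
        rw [← hWq]; exact ⟨hb, mem_pathVertsAux (by omega)⟩
      exact this
    have := injq l (l+1) (by omega) (by omega) (by rw [hay, hby])
    omega


end CactusAux

theorem cactus_at_most_one_connecting_path (G : SimpleGraph V) [Fintype V]
    (hG : IsCactus G) (r r' : ℕ) (hr : 1 ≤ r) (hrad : grad G = r) (c : V)
    (hc : ecc G c = r) (hr' : r - 1 ≤ r' ∧ r' ≤ r)
    (p q : ℕ → V) (hp : IsIsomPath G p r) (hq : IsIsomPath G q r')
    (hp0 : p 0 = c) (hq0 : q 0 = c)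
    (hmeet : pathVerts p r ∩ pathVerts q r' = {c})
    (x₁ y₁ x₂ y₂ : V) (W₁ : G.Walk x₁ y₁) (W₂ : G.Walk x₂ y₂)
    (h₁ : ConnPath G p q r r' c x₁ y₁ W₁) (h₂ : ConnPath G p q r r' c x₂ y₂ W₂) :
    x₁ = x₂ ∧ y₁ = y₂ ∧ W₁.support = W₂.support := by
  obtain ⟨hGc, hcact⟩ := hG
  obtain ⟨hW₁, ⟨i₁, hi₁1, hi₁r, hx₁⟩, ⟨j₁, hj₁1, hj₁r, hy₁⟩, hc₁, hP₁, hQ₁⟩ := h₁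
  obtain ⟨hW₂, ⟨i₂, hi₂1, hi₂r, hx₂⟩, ⟨j₂, hj₂1, hj₂r, hy₂⟩, hc₂, hP₂, hQ₂⟩ := h₂
  have injp : ∀ a b, a ≤ r → b ≤ r → p a = p b → a = b := by
    intro a b ha hb hab
    have hd := hp a b ha hb
    rw [hab, SimpleGraph.dist_self] at hd
    omega
  have injq : ∀ a b, a ≤ r' → b ≤ r' → q a = q b → a = b := by
    intro a b ha hb hab
    have hd := hq a b ha hb
    rw [hab, SimpleGraph.dist_self] at hd
    omega
  have adjp : ∀ k, k < r → G.Adj (p k) (p (k+1)) := by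
    intro k hk
    have hd := hp k (k+1) (by omega) (by omega)
    rw [show max k (k+1) - min k (k+1) = 1 from by omega] at hd
    exact SimpleGraph.dist_eq_one_iff_adj.mp hd
  have adjq : ∀ k, k < r' → G.Adj (q k) (q (k+1)) := by
    intro k hk
    have hd := hq k (k+1) (by omega) (by omega)
    rw [show max k (k+1) - min k (k+1) = 1 from by omega] at hd
    exact SimpleGraph.dist_eq_one_iff_adj.mp hd
  have hap₁ : ∀ k, k < i₁ → G.Adj (p k) (p (k+1)) := fun k hk => adjp k (by omega)
  have hap₂ : ∀ k, k < i₂ → G.Adj (p k) (p (k+1)) := fun k hk => adjp k (by omega)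
  have haq₁ : ∀ k, k < j₁ → G.Adj (q k) (q (k+1)) := fun k hk => adjq k (by omega)
  have haq₂ : ∀ k, k < j₂ → G.Adj (q k) (q (k+1)) := fun k hk => adjq k (by omega)
  have cyc₁ : (bigCycle G p q i₁ j₁ hap₁ haq₁ hp0 hq0 hx₁ hy₁ W₁).IsCycle :=
    bigCycle_isCycle hi₁r hj₁r hi₁1 hj₁1 injp injq hmeet hW₁ hP₁ hQ₁
  have cyc₂ : (bigCycle G p q i₂ j₂ hap₂ haq₂ hp0 hq0 hx₂ hy₂ W₂).IsCycle :=
    bigCycle_isCycle hi₂r hj₂r hi₂1 hj₂1 injp injq hmeet hW₂ hP₂ hQ₂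
  have hfe₁ : s(p 0, p 1) ∈ (bigCycle G p q i₁ j₁ hap₁ haq₁ hp0 hq0 hx₁ hy₁ W₁).edges :=
    (bigCycle_edges_mem _).mpr (Or.inl ⟨0, by omega, rfl⟩)
  have hfe₂ : s(p 0, p 1) ∈ (bigCycle G p q i₂ j₂ hap₂ haq₂ hp0 hq0 hx₂ hy₂ W₂).edges :=
    (bigCycle_edges_mem _).mpr (Or.inl ⟨0, by omega, rfl⟩)
  have hiff := hcact c c _ _ cyc₁ cyc₂ s(p 0, p 1) hfe₁ hfe₂
  have h21 : i₂ ≤ i₁ := pIndex_le injp hp0 hmeet hP₁ hi₂1 hi₂r hi₁r hj₁r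
    ((bigCycle_edges_mem _).mp ((hiff s(p (i₂-1), p i₂)).mpr ((bigCycle_edges_mem _).mpr
      (Or.inl ⟨i₂ - 1, by omega, by rw [Nat.sub_add_cancel hi₂1]⟩))))
  have h12 : i₁ ≤ i₂ := pIndex_le injp hp0 hmeet hP₂ hi₁1 hi₁r hi₂r hj₂r
    ((bigCycle_edges_mem _).mp ((hiff s(p (i₁-1), p i₁)).mp ((bigCycle_edges_mem _).mpr
      (Or.inl ⟨i₁ - 1, by omega, by rw [Nat.sub_add_cancel hi₁1]⟩))))
  have hq21 : j₂ ≤ j₁ := qIndex_le injq hq0 hmeet hQ₁ hj₂1 hj₂r hi₁r hj₁r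
    ((bigCycle_edges_mem _).mp ((hiff s(q (j₂-1), q j₂)).mpr ((bigCycle_edges_mem _).mpr
      (Or.inr (Or.inr ⟨j₂ - 1, by omega, by rw [Nat.sub_add_cancel hj₂1]⟩)))))
  have hq12 : j₁ ≤ j₂ := qIndex_le injq hq0 hmeet hQ₂ hj₁1 hj₁r hi₂r hj₂r
    ((bigCycle_edges_mem _).mp ((hiff s(q (j₁-1), q j₁)).mp ((bigCycle_edges_mem _).mpr
      (Or.inr (Or.inr ⟨j₁ - 1, by omega, by rw [Nat.sub_add_cancel hj₁1]⟩)))))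
  have hxeq : x₁ = x₂ := by rw [← hx₁, ← hx₂]; congr 1; omega
  have hyeq : y₁ = y₂ := by rw [← hy₁, ← hy₂]; congr 1; omega
  subst hxeq
  subst hyeq
  refine ⟨rfl, rfl, ?_⟩
  refine path_support_eq W₁ hW₁ W₂ hW₂ (fun e => ⟨fun he => ?_, fun he => ?_⟩)
  · exact wEdge_transfer injp injq hP₁ hQ₁ hi₂r hj₂r he
      ((bigCycle_edges_mem _).mp ((hiff e).mp ((bigCycle_edges_mem _).mpr (Or.inr (Or.inl he)))))
  · exact wEdge_transfer injp injq hP₂ hQ₂ hi₁r hj₁r he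
      ((bigCycle_edges_mem _).mp ((hiff e).mpr ((bigCycle_edges_mem _).mpr (Or.inr (Or.inl he)))))
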